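/- Let G and H be finite groups. Then the set of all functions f from the set of subgroups of G×H to ℤ that arise as f(L) = |X^L| − |Y^L| for some orthogonal pair (X,Y) of finite bifree (G,H)-bisets is finite. (Since marks determine elements of the double Burnside group, this says that the set B°^Δ(G,H) of orthogonal elements is finite.) -/

import Mathlib

open MulAction

/-- An isomorphism of `M`-sets: an equivariant bijection. -/
def IsoAsGSets (M X Y : Type*) [SMul M X] [SMul M Y] : Prop :=
  ∃ e : X ≃ Y, ∀ (m : M) (x : X), e (m • x) = m • e x

/-- The twisted diagonal subgroup `Δ(R,α,S) = {(α s, s) | s ∈ S}` of `G × H`,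
for an isomorphism `α : S ≃* R`. -/
def twistedDiagonal {G H : Type*} [Group G] [Group H] (R : Subgroup G) (S : Subgroup H)
    (α : S ≃* R) : Subgroup (G × H) :=
  ((R.subtype.comp α.toMonoidHom).prod S.subtype).range

/-- `Δ(G,φ,H) = {(φ h, h) | h ∈ H} ≤ G × H` for an isomorphism `φ : H ≃* G`. -/
def fullTwistedDiagonal {G H : Type*} [Group G] [Group H] (φ : H ≃* G) : Subgroup (G × H) :=
  (φ.toMonoidHom.prod (MonoidHom.id H)).range

/-- The diagonal subgroup `Δ(R) = {(r,r) | r ∈ R} ≤ G × G`. -/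
def diagSubgroup {G : Type*} [Group G] (R : Subgroup G) : Subgroup (G × G) :=
  (R.subtype.prod R.subtype).range

/-- A `(G,H)`-biset (i.e. a left `(G × H)`-set) is bifree if it is free as a left `G`-set
and free as a right `H`-set. -/
def IsBifree (G H X : Type*) [Group G] [Group H] [MulAction (G × H) X] : Prop :=
  (∀ (g : G) (x : X), (g, (1 : H)) • x = x → g = 1) ∧
  (∀ (h : H) (x : X), ((1 : G), h) • x = x → h = 1)

section Tensor

variable (G H K : Type*) [Group G] [Group H] [Group K]
variable (X Y : Type*) [MulAction (G × H) X] [MulAction (H × K) Y]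

/-- The relation on `X × Y` identifying `(x·h, y)` with `(x, h·y)`. -/
def bisetSetoid : Setoid (X × Y) where
  r p q := ∃ h : H, q.1 = ((1 : G), h) • p.1 ∧ q.2 = (h, (1 : K)) • p.2
  iseqv := by
    constructor
    · intro p
      exact ⟨1, by simp [Prod.mk_one_one], by simp [Prod.mk_one_one]⟩
    · rintro p q ⟨h, h1, h2⟩
      exact ⟨h⁻¹, by simp [h1, smul_smul, Prod.mk_one_one], by simp [h2, smul_smul, Prod.mk_one_one]⟩
    · rintro p q r ⟨h, h1, h2⟩ ⟨h', h1', h2'⟩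
      exact ⟨h' * h, by simp [h1, h1', smul_smul], by simp [h2, h2', smul_smul]⟩

/-- The tensor product `X ×_H Y` of a `(G,H)`-biset and an `(H,K)`-biset;
a `(G,K)`-biset. -/
def BisetTensor : Type _ :=
  Quotient (bisetSetoid G H K X Y)

variable {G H K X Y}

/-- The class of `(x, y)` in `X ×_H Y`. -/
def BisetTensor.mk (p : X × Y) : BisetTensor G H K X Y :=
  Quotient.mk (bisetSetoid G H K X Y) p

variable (G H K X Y)

instance : SMul (G × K) (BisetTensor G H K X Y) :=
  ⟨fun a => Quotient.map (fun p => ((a.1, (1 : H)) • p.1, ((1 : H), a.2) • p.2))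
    (by
      rintro p q ⟨h, h1, h2⟩
      exact ⟨h, by simp [h1, smul_smul], by simp [h2, smul_smul]⟩)⟩

variable {G H K X Y}

theorem BisetTensor.smul_mk (a : G × K) (p : X × Y) :
    a • (BisetTensor.mk p : BisetTensor G H K X Y) =
      BisetTensor.mk ((a.1, (1 : H)) • p.1, ((1 : H), a.2) • p.2) :=
  rfl

variable (G H K X Y)

instance : MulAction (G × K) (BisetTensor G H K X Y) where
  one_smul q := Quotient.inductionOn q fun p => by
    refine Quotient.sound ⟨1, ?_, ?_⟩ <;> simp [Prod.mk_one_one]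
  mul_smul a b q := Quotient.inductionOn q fun p => by
    refine Quotient.sound ⟨1, ?_, ?_⟩ <;> simp [smul_smul, Prod.mk_one_one]

end Tensor

section Op

/-- The opposite biset: a `(G,H)`-biset viewed as an `(H,G)`-biset via
`h · x · g := g⁻¹ · x · h⁻¹`. -/
def BisetOp (H G X : Type*) : Type _ := (fun _ _ => X) H G

instance BisetOp.instMulAction {G H : Type*} [Group G] [Group H] (X : Type*)
    [MulAction (G × H) X] : MulAction (H × G) (BisetOp H G X) :=
  MulAction.compHom X (MulEquiv.prodComm : H × G ≃* G × H).toMonoidHom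

instance BisetOp.instFinite {G H : Type*} (X : Type*) [Finite X] : Finite (BisetOp H G X) :=
  inferInstanceAs (Finite X)

end Op

section Grp

/-- The group `G` viewed as a `(G,G)`-biset via left and right multiplication. -/
structure BisetGrp (G : Type*) where
  /-- the underlying group element -/
  val : G

instance BisetGrp.instSMul {G : Type*} [Group G] : SMul (G × G) (BisetGrp G) :=
  ⟨fun p x => ⟨p.1 * x.val * p.2⁻¹⟩⟩

theorem BisetGrp.smul_def {G : Type*} [Group G] (p : G × G) (x : BisetGrp G) :
    p • x = ⟨p.1 * x.val * p.2⁻¹⟩ := rfl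

instance BisetGrp.instMulAction {G : Type*} [Group G] : MulAction (G × G) (BisetGrp G) where
  one_smul x := by
    cases x
    simp [BisetGrp.smul_def]
  mul_smul p q x := by
    cases x
    simp [BisetGrp.smul_def, mul_assoc]

instance BisetGrp.instFinite {G : Type*} [Finite G] : Finite (BisetGrp G) :=
  Finite.of_equiv G ⟨fun g => ⟨g⟩, fun x => x.val, fun _ => rfl, fun _ => rfl⟩

end Grp

/-- A pair `(X,Y)` of `(G,H)`-bisets is an orthogonal pair if
`(X ×_H X°) ⊔ (Y ×_H Y°) ≅ G ⊔ (X ×_H Y°) ⊔ (Y ×_H X°)` as `(G,G)`-bisets;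
this encodes the equation `([X] - [Y]) ·_H ([X] - [Y])° = [G]` in `B^Δ(G,G)`. -/
def IsOrthogonalPair (G H : Type*) [Group G] [Group H] (X Y : Type*)
    [MulAction (G × H) X] [MulAction (G × H) Y] : Prop :=
  IsoAsGSets (G × G)
    (BisetTensor G H G X (BisetOp H G X) ⊕ BisetTensor G H G Y (BisetOp H G Y))
    (BisetGrp G ⊕ (BisetTensor G H G X (BisetOp H G Y) ⊕ BisetTensor G H G Y (BisetOp H G X)))

section Iota

/-- For a `G`-set `Z`, the `(G,G)`-biset `ι(Z) = G × Z` with action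
`(g₁,g₂) • (g,z) = (g₁ g g₂⁻¹, g₂ • z)`. -/
structure IotaBiset (G Z : Type*) where
  /-- the group component -/
  fst : G
  /-- the `G`-set component -/
  snd : Z

instance IotaBiset.instSMul {G Z : Type*} [Group G] [MulAction G Z] :
    SMul (G × G) (IotaBiset G Z) :=
  ⟨fun p x => ⟨p.1 * x.fst * p.2⁻¹, p.2 • x.snd⟩⟩

theorem IotaBiset.smul_def {G Z : Type*} [Group G] [MulAction G Z] (p : G × G)
    (x : IotaBiset G Z) : p • x = ⟨p.1 * x.fst * p.2⁻¹, p.2 • x.snd⟩ := rfl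

instance IotaBiset.instMulAction {G Z : Type*} [Group G] [MulAction G Z] :
    MulAction (G × G) (IotaBiset G Z) where
  one_smul x := by
    cases x
    simp [IotaBiset.smul_def]
  mul_smul p q x := by
    cases x
    simp [IotaBiset.smul_def, mul_assoc, mul_smul]

instance IotaBiset.instFinite {G Z : Type*} [Finite G] [Finite Z] : Finite (IotaBiset G Z) :=
  Finite.of_equiv (G × Z) ⟨fun p => ⟨p.1, p.2⟩, fun x => (x.fst, x.snd), fun _ => rfl,
    fun _ => rfl⟩

end Iota

/-- An orthogonal pair of finite bifree `(G,H)`-bisets, encoding an element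
`γ = [X] - [Y]` of `B^Δ(G,H)` with `γ ·_H γ° = [G]`. -/
structure OrthPair (G H : Type) [Group G] [Group H] : Type 1 where
  /-- the first biset -/
  X : Type
  /-- the second biset -/
  Y : Type
  [actX : MulAction (G × H) X]
  [actY : MulAction (G × H) Y]
  [finX : Finite X]
  [finY : Finite Y]
  bifreeX : IsBifree G H X
  bifreeY : IsBifree G H Y
  orth : IsOrthogonalPair G H X Y

attribute [instance] OrthPair.actX OrthPair.actY OrthPair.finX OrthPair.finY
section AuxStatement9

open MulAction

variable {G H : Type} [Group G] [Group H]

instance BisetTensor.instFinite {G H K X Y : Type*} [Group G] [Group H] [Group K]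
    [MulAction (G × H) X] [MulAction (H × K) Y] [Finite X] [Finite Y] :
    Finite (BisetTensor G H K X Y) :=
  Quotient.finite _

instance {R : Subgroup G} [Finite G] [Finite H] : Finite (↥R →* H) :=
  Finite.of_injective (fun f => (f : ↥R → H)) DFunLike.coe_injective

/-- The graph subgroup of `ψ : R →* H`. -/
def graphSub (R : Subgroup G) (ψ : ↥R →* H) : Subgroup (G × H) :=
  (R.subtype.prod ψ).range

lemma mem_graphSub {R : Subgroup G} {ψ : ↥R →* H} {a : G × H} :
    a ∈ graphSub R ψ ↔ ∃ r : ↥R, ((r : G), ψ r) = a :=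
  Iff.rfl

lemma mem_fixed_graph_iff {X : Type*} [MulAction (G × H) X] {R : Subgroup G} {ψ : ↥R →* H}
    {x : X} :
    x ∈ fixedPoints ↥(graphSub R ψ) X ↔ ∀ r : ↥R, (((r : G), ψ r) : G × H) • x = x := by
  constructor
  · intro hx r
    exact hx ⟨((r : G), ψ r), mem_graphSub.2 ⟨r, rfl⟩⟩
  · rintro hx ⟨a, ha⟩
    obtain ⟨r, rfl⟩ := mem_graphSub.1 ha
    exact hx r

lemma mem_diagSubgroup {R : Subgroup G} {a : G × G} :
    a ∈ diagSubgroup R ↔ ∃ r : ↥R, (((r : G), (r : G)) : G × G) = a :=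
  Iff.rfl

/-- key uniqueness from bifreeness: the `H`-component of a stabilizing pair is unique. -/
lemma IsBifree.unique_right {X : Type*} [MulAction (G × H) X] (hX : IsBifree G H X)
    {g : G} {h h' : H} {x : X} (h1 : ((g, h) : G × H) • x = x)
    (h2 : ((g, h') : G × H) • x = x) : h = h' := by
  have e1 : (((1 : G), h'⁻¹ * h) : G × H) • x = x := by
    refine MulAction.injective ((g, h') : G × H) ?_
    show ((g, h') : G × H) • ((((1 : G), h'⁻¹ * h) : G × H) • x) = ((g, h') : G × H) • x
    rw [smul_smul, h2]
    have e : ((g, h') : G × H) * ((1 : G), h'⁻¹ * h) = (g, h) := by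
      rw [Prod.mk_mul_mk, mul_one, mul_inv_cancel_left]
    rw [e, h1]
  have := hX.2 (h'⁻¹ * h) x e1
  rwa [inv_mul_eq_one, eq_comm] at this

/-- If `X` is bifree and `L` has a fixed point in `X`, then `L` is a graph subgroup. -/
lemma exists_graph_of_fixed {X : Type*} [MulAction (G × H) X] (hX : IsBifree G H X)
    {L : Subgroup (G × H)} {x : X} (hx : x ∈ fixedPoints ↥L X) :
    ∃ (R : Subgroup G) (ψ : ↥R →* H), L = graphSub R ψ := by
  classical
  set R : Subgroup G := L.map (MonoidHom.fst G H) with hR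
  have hmem : ∀ r : ↥R, ∃ h : H, ((r : G), h) ∈ L := by
    rintro ⟨r, hr⟩
    obtain ⟨a, haL, ha⟩ := hr
    exact ⟨a.2, by simpa [← ha] using haL⟩
  have hfix : ∀ a : G × H, a ∈ L → a • x = x := fun a haL => hx ⟨a, haL⟩
  have huniq : ∀ (g : G) (h h' : H), (g, h) ∈ L → (g, h') ∈ L → h = h' := by
    intro g h h' hh hh'
    exact hX.unique_right (hfix _ hh) (hfix _ hh')
  set f : ↥R → H := fun r => Classical.choose (hmem r) with hf
  have hfL : ∀ r : ↥R, ((r : G), f r) ∈ L := fun r => Classical.choose_spec (hmem r)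
  have hmul : ∀ r s : ↥R, f (r * s) = f r * f s := by
    intro r s
    have h1 : (((r * s : ↥R) : G), f r * f s) ∈ L := by
      have := mul_mem (hfL r) (hfL s)
      simpa [Prod.mk_mul_mk] using this
    exact huniq _ _ _ (hfL (r * s)) h1
  refine ⟨R, MonoidHom.mk' f hmul, ?_⟩
  ext a
  rw [mem_graphSub]
  constructor
  · intro haL
    have haR : a.1 ∈ R := ⟨a, haL, rfl⟩
    refine ⟨⟨a.1, haR⟩, ?_⟩
    have : f ⟨a.1, haR⟩ = a.2 := huniq a.1 _ _ (hfL ⟨a.1, haR⟩) (by simpa using haL)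
    simp [MonoidHom.mk'_apply, this]
  · rintro ⟨r, rfl⟩
    exact hfL r

end AuxStatement9
section AuxCounting

open MulAction

/-- Explicit coercion into the opposite biset. -/
def BisetOp.op {H G X : Type*} (x : X) : BisetOp H G X := x

/-- Explicit coercion out of the opposite biset. -/
def BisetOp.unop {H G X : Type*} (x : BisetOp H G X) : X := x

variable {G H : Type} [Group G] [Group H]
variable {X Y : Type} [MulAction (G × H) X] [MulAction (G × H) Y]

lemma tensor_mk_eq_iff (p q : X × BisetOp H G Y) :
    (BisetTensor.mk p : BisetTensor G H G X (BisetOp H G Y)) = BisetTensor.mk q ↔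
      ∃ h : H, q.1 = (((1 : G), h) : G × H) • p.1 ∧
        q.2.unop = (((1 : G), h) : G × H) • p.2.unop := by
  exact (Quotient.eq : Quotient.mk (bisetSetoid G H G X (BisetOp H G Y)) p = Quotient.mk _ q ↔ _)

lemma tensor_smul_mk' (g₁ g₂ : G) (x : X) (y : Y) :
    ((g₁, g₂) : G × G) •
        (BisetTensor.mk (x, BisetOp.op (H := H) y) : BisetTensor G H G X (BisetOp H G Y)) =
      BisetTensor.mk ((((g₁, (1 : H)) : G × H) • x),
        BisetOp.op ((((g₂, (1 : H)) : G × H) • y : Y))) :=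
  rfl

/-- translating a stabilizing pair along the right `H`-translation. -/
lemma conj_smul {Z : Type*} [MulAction (G × H) Z] (r : G) (h k : H) (z : Z)
    (hk : ((r, k) : G × H) • z = z) :
    ((r, h * k * h⁻¹) : G × H) • ((((1 : G), h) : G × H) • z) = (((1 : G), h) : G × H) • z := by
  have e : ((r, h * k * h⁻¹) : G × H) * ((1 : G), h) = (((1 : G), h) : G × H) * (r, k) := by
    rw [Prod.mk_mul_mk, Prod.mk_mul_mk, mul_one, one_mul, inv_mul_cancel_right]
  rw [smul_smul, e, mul_smul, hk]

lemma fixed_tensor_iff {R : Subgroup G} (x : X) (y : Y) :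
    ((BisetTensor.mk (x, BisetOp.op (H := H) y) : BisetTensor G H G X (BisetOp H G Y)) ∈
        fixedPoints ↥(diagSubgroup R) (BisetTensor G H G X (BisetOp H G Y))) ↔
      ∀ r : ↥R, ∃ h : H, (((r : G), h) : G × H) • x = x ∧ (((r : G), h) : G × H) • y = y := by
  constructor
  · intro hf r
    have h1 : (((r : G), (r : G)) : G × G) •
        (BisetTensor.mk (x, BisetOp.op (H := H) y) : BisetTensor G H G X (BisetOp H G Y)) =
        BisetTensor.mk (x, BisetOp.op (H := H) y) :=
      hf ⟨(((r : G), (r : G)) : G × G), mem_diagSubgroup.2 ⟨r, rfl⟩⟩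
    rw [tensor_smul_mk', tensor_mk_eq_iff] at h1
    obtain ⟨h, e1, e2⟩ := h1
    have e : ∀ r' : G, (((r' : G), h) : G × H) = (((1 : G), h) : G × H) * ((r' : G), (1 : H)) := by
      intro r'; rw [Prod.mk_mul_mk, one_mul, mul_one]
    refine ⟨h, ?_, ?_⟩
    · rw [e, mul_smul, ← e1]
    · rw [e, mul_smul]
      exact e2.symm
  · intro hc m
    obtain ⟨r, hr⟩ := mem_diagSubgroup.1 m.2
    have key : (m : G × G) •
        (BisetTensor.mk (x, BisetOp.op (H := H) y) : BisetTensor G H G X (BisetOp H G Y)) =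
        BisetTensor.mk (x, BisetOp.op (H := H) y) := by
      rw [← hr, tensor_smul_mk', tensor_mk_eq_iff]
      obtain ⟨h, e1, e2⟩ := hc r
      have e : (((1 : G), h) : G × H) * ((r : G), (1 : H)) = ((r : G), h) := by
        rw [Prod.mk_mul_mk, one_mul, mul_one]
      refine ⟨h, ?_, ?_⟩
      · rw [smul_smul, e, e1]
      · show y = (((1 : G), h) : G × H) • (((r : G), (1 : H)) : G × H) • y
        rw [smul_smul, e, e2]
    exact key

/-- The invariant condition defining `T`. -/
def TCond (R : Subgroup G) (p : X × Y) : Prop :=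
  ∀ r : ↥R, ∃ h : H, (((r : G), h) : G × H) • p.1 = p.1 ∧ (((r : G), h) : G × H) • p.2 = p.2

lemma card_T_eq_sum (hX : IsBifree G H X) (R : Subgroup G) [Fintype (↥R →* H)]
    [Finite X] [Finite Y] :
    Nat.card {p : X × Y // TCond (H := H) R p} =
      ∑ ψ : ↥R →* H,
        Nat.card (fixedPoints ↥(graphSub R ψ) X) * Nat.card (fixedPoints ↥(graphSub R ψ) Y) := by
  classical
  have key : Nat.card (Σ ψ : ↥R →* H,
      (↥(fixedPoints ↥(graphSub R ψ) X) × ↥(fixedPoints ↥(graphSub R ψ) Y))) =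
      Nat.card {p : X × Y // TCond (H := H) R p} := by
    apply Nat.card_congr
    refine Equiv.ofBijective
      (fun s => ⟨(s.2.1.1, s.2.2.1), fun r =>
        ⟨s.1 r, mem_fixed_graph_iff.1 s.2.1.2 r, mem_fixed_graph_iff.1 s.2.2.2 r⟩⟩) ⟨?_, ?_⟩
    · rintro ⟨ψ, ⟨x, hx⟩, ⟨y, hy⟩⟩ ⟨ψ', ⟨x', hx'⟩, ⟨y', hy'⟩⟩ hEq
      simp only [Subtype.mk.injEq, Prod.mk.injEq] at hEq
      obtain ⟨rfl, rfl⟩ := hEq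
      have hψ : ψ = ψ' := by
        ext r
        exact hX.unique_right (mem_fixed_graph_iff.1 hx r) (mem_fixed_graph_iff.1 hx' r)
      subst hψ
      rfl
    · rintro ⟨⟨x, y⟩, hT⟩
      set f : ↥R → H := fun r => Classical.choose (hT r) with hfdef
      have hspec : ∀ r : ↥R, (((r : G), f r) : G × H) • x = x ∧
          (((r : G), f r) : G × H) • y = y := fun r => Classical.choose_spec (hT r)
      have hmul : ∀ r s : ↥R, f (r * s) = f r * f s := by
        intro r s
        have h1 : ((((r * s : ↥R) : G), f r * f s) : G × H) • x = x := by
          have e : ((((r * s : ↥R) : G), f r * f s) : G × H) =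
              (((r : G), f r) : G × H) * ((s : G), f s) := by
            rw [Prod.mk_mul_mk]; rfl
          rw [e, mul_smul, (hspec s).1, (hspec r).1]
        exact hX.unique_right (hspec (r * s)).1 h1
      refine ⟨⟨MonoidHom.mk' f hmul,
        ⟨x, mem_fixed_graph_iff.2 fun r => (hspec r).1⟩,
        ⟨y, mem_fixed_graph_iff.2 fun r => (hspec r).2⟩⟩, rfl⟩
  rw [← key]
  letI : ∀ ψ : ↥R →* H, Fintype (↥(fixedPoints ↥(graphSub R ψ) X)) := fun _ => Fintype.ofFinite _
  letI : ∀ ψ : ↥R →* H, Fintype (↥(fixedPoints ↥(graphSub R ψ) Y)) := fun _ => Fintype.ofFinite _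
  rw [Nat.card_eq_fintype_card, Fintype.card_sigma]
  exact Finset.sum_congr rfl fun ψ _ => by
    rw [Fintype.card_prod, Nat.card_eq_fintype_card, Nat.card_eq_fintype_card]

end AuxCounting
section AuxFinal

open MulAction

variable {G H : Type} [Group G] [Group H]
variable {X Y : Type} [MulAction (G × H) X] [MulAction (G × H) Y]

lemma card_T_eq (hX : IsBifree G H X) (R : Subgroup G) :
    Nat.card {p : X × Y // TCond (H := H) R p} =
      Nat.card ↥(fixedPoints ↥(diagSubgroup R) (BisetTensor G H G X (BisetOp H G Y))) *
        Nat.card H := by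
  classical
  have hsec : ∀ c : ↥(fixedPoints ↥(diagSubgroup R) (BisetTensor G H G X (BisetOp H G Y))),
      ∃ t : {p : X × Y // TCond (H := H) R p},
      (BisetTensor.mk (t.1.1, BisetOp.op (H := H) t.1.2) :
        BisetTensor G H G X (BisetOp H G Y)) = c.1 := by
    rintro ⟨c, hc⟩
    obtain ⟨pr, hpr⟩ := Quotient.exists_rep (c : Quotient (bisetSetoid G H G X (BisetOp H G Y)))
    have hpr' : (BisetTensor.mk (pr.1, BisetOp.op (H := H) (BisetOp.unop pr.2)) :
        BisetTensor G H G X (BisetOp H G Y)) = c := hpr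
    rw [← hpr'] at hc
    exact ⟨⟨(pr.1, BisetOp.unop pr.2), (fixed_tensor_iff _ _).1 hc⟩, hpr'⟩
  choose s hs using hsec
  have hclose : ∀ (h : H) (t : {p : X × Y // TCond (H := H) R p}),
      TCond (H := H) R ((((1 : G), h) : G × H) • t.1.1, (((1 : G), h) : G × H) • t.1.2) := by
    intro h t r
    obtain ⟨k, e1, e2⟩ := t.2 r
    exact ⟨h * k * h⁻¹, conj_smul _ _ _ _ e1, conj_smul _ _ _ _ e2⟩
  set F : ↥(fixedPoints ↥(diagSubgroup R) (BisetTensor G H G X (BisetOp H G Y))) × H →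
      {p : X × Y // TCond (H := H) R p} :=
    fun ch => ⟨((((1 : G), ch.2) : G × H) • (s ch.1).1.1,
      (((1 : G), ch.2) : G × H) • (s ch.1).1.2), hclose ch.2 (s ch.1)⟩ with hF
  have hπF : ∀ ch, (BisetTensor.mk ((F ch).1.1, BisetOp.op (H := H) (F ch).1.2) :
      BisetTensor G H G X (BisetOp H G Y)) = ch.1.1 := by
    intro ch
    refine Eq.trans ?_ (hs ch.1)
    exact ((tensor_mk_eq_iff ((s ch.1).1.1, BisetOp.op (H := H) (s ch.1).1.2)
      _).2 ⟨ch.2, rfl, rfl⟩).symm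
  have hbij : Function.Bijective F := by
    constructor
    · rintro ⟨c, h⟩ ⟨c', h'⟩ hEq
      have hcc : c = c' := by
        apply Subtype.ext
        rw [← hπF (c, h), ← hπF (c', h'), hEq]
      subst hcc
      have hfst : (((1 : G), h) : G × H) • (s c).1.1 = (((1 : G), h') : G × H) • (s c).1.1 := by
        have := congrArg (fun t => t.1.1) hEq
        exact this
      have e : (((1 : G), h'⁻¹ * h) : G × H) • (s c).1.1 = (s c).1.1 := by
        have edec : (((1 : G), h'⁻¹ * h) : G × H) =
            (((1 : G), h') : G × H)⁻¹ * (((1 : G), h) : G × H) := by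
          rw [Prod.inv_mk, inv_one, Prod.mk_mul_mk, one_mul]
        rw [edec, mul_smul, hfst, inv_smul_smul]
      have : h'⁻¹ * h = 1 := hX.2 _ _ e
      have hhh : h = h' := by
        rw [inv_mul_eq_one] at this
        exact this.symm
      rw [hhh]
    · rintro t
      have hmem : (BisetTensor.mk (t.1.1, BisetOp.op (H := H) t.1.2) :
          BisetTensor G H G X (BisetOp H G Y)) ∈
          fixedPoints ↥(diagSubgroup R) (BisetTensor G H G X (BisetOp H G Y)) :=
        (fixed_tensor_iff _ _).2 t.2
      set c : ↥(fixedPoints ↥(diagSubgroup R) (BisetTensor G H G X (BisetOp H G Y))) :=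
        ⟨_, hmem⟩ with hcdef
      obtain ⟨h, e1, e2⟩ := (tensor_mk_eq_iff _ _).1 (hs c)
      refine ⟨(c, h), ?_⟩
      apply Subtype.ext
      apply Prod.ext
      · exact e1.symm
      · exact e2.symm
  rw [← Nat.card_congr (Equiv.ofBijective F hbij), Nat.card_prod, mul_comm]

lemma key_count [Finite X] [Finite Y] (hX : IsBifree G H X) (R : Subgroup G)
    [Fintype (↥R →* H)] :
    Nat.card ↥(fixedPoints ↥(diagSubgroup R) (BisetTensor G H G X (BisetOp H G Y))) *
        Nat.card H =
      ∑ ψ : ↥R →* H,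
        Nat.card ↥(fixedPoints ↥(graphSub R ψ) X) *
          Nat.card ↥(fixedPoints ↥(graphSub R ψ) Y) := by
  rw [← card_T_eq hX R, card_T_eq_sum hX R]

lemma iso_fixed_card {M A B : Type*} [Group M] [MulAction M A] [MulAction M B]
    (hiso : IsoAsGSets M A B) (S : Subgroup M) :
    Nat.card ↥(fixedPoints ↥S A) = Nat.card ↥(fixedPoints ↥S B) := by
  obtain ⟨e, he⟩ := hiso
  apply Nat.card_congr
  refine Equiv.subtypeEquiv e fun a => ?_
  constructor
  · intro ha m
    show (m : M) • e a = e a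
    rw [← he, show (m : M) • a = a from ha m]
  · intro hb m
    show (m : M) • a = a
    apply e.injective
    rw [he, show (m : M) • e a = e a from hb m]

lemma card_fixed_sum {M A B : Type*} [Group M] [MulAction M A] [MulAction M B]
    [Finite A] [Finite B] (S : Subgroup M) :
    Nat.card ↥(fixedPoints ↥S (A ⊕ B)) =
      Nat.card ↥(fixedPoints ↥S A) + Nat.card ↥(fixedPoints ↥S B) := by
  rw [← Nat.card_sum]
  apply Nat.card_congr
  refine ⟨fun z => ?_, fun w => ?_, ?_, ?_⟩
  · exact match z with
    | ⟨Sum.inl a, h⟩ => Sum.inl ⟨a, fun m => by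
        have h1 := h m
        rw [Subgroup.smul_def, Sum.smul_inl, Sum.inl.injEq] at h1
        rw [Subgroup.smul_def]; exact h1⟩
    | ⟨Sum.inr b, h⟩ => Sum.inr ⟨b, fun m => by
        have h1 := h m
        rw [Subgroup.smul_def, Sum.smul_inr, Sum.inr.injEq] at h1
        rw [Subgroup.smul_def]; exact h1⟩
  · exact match w with
    | Sum.inl ⟨a, ha⟩ => ⟨Sum.inl a, fun m => by
        rw [Subgroup.smul_def, Sum.smul_inl]
        exact congrArg Sum.inl (by rw [← Subgroup.smul_def]; exact ha m)⟩
    | Sum.inr ⟨b, hb⟩ => ⟨Sum.inr b, fun m => by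
        rw [Subgroup.smul_def, Sum.smul_inr]
        exact congrArg Sum.inr (by rw [← Subgroup.smul_def]; exact hb m)⟩
  · rintro ⟨a | b, h⟩ <;> rfl
  · rintro (⟨a, ha⟩ | ⟨b, hb⟩) <;> rfl

lemma card_fixed_grp_le [Finite G] (S : Subgroup (G × G)) :
    Nat.card ↥(fixedPoints ↥S (BisetGrp G)) ≤ Nat.card G := by
  have h1 : Nat.card ↥(fixedPoints ↥S (BisetGrp G)) ≤ Nat.card (BisetGrp G) :=
    Nat.card_le_card_of_injective _ Subtype.val_injective
  have h2 : Nat.card (BisetGrp G) = Nat.card G :=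
    Nat.card_congr ⟨fun x => x.val, fun g => ⟨g⟩, fun _ => rfl, fun _ => rfl⟩
  omega

lemma int_abs_le_sq (n : ℤ) : |n| ≤ n ^ 2 := by
  have h : |n| ≤ |n| ^ 2 := by
    rcases eq_or_ne n 0 with rfl | hn
    · simp
    · have h1 : 1 ≤ |n| := Int.one_le_abs (by simpa using hn)
      nlinarith
  rwa [sq_abs] at h

lemma orth_count [Finite G] [Finite H] (R : Subgroup G) {X Y : Type}
    [MulAction (G × H) X] [MulAction (G × H) Y] [Finite X] [Finite Y]
    (horth : IsOrthogonalPair G H X Y) :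
    Nat.card ↥(fixedPoints ↥(diagSubgroup R) (BisetTensor G H G X (BisetOp H G X))) +
      Nat.card ↥(fixedPoints ↥(diagSubgroup R) (BisetTensor G H G Y (BisetOp H G Y))) =
    Nat.card ↥(fixedPoints ↥(diagSubgroup R) (BisetGrp G)) +
      (Nat.card ↥(fixedPoints ↥(diagSubgroup R) (BisetTensor G H G X (BisetOp H G Y))) +
       Nat.card ↥(fixedPoints ↥(diagSubgroup R) (BisetTensor G H G Y (BisetOp H G X)))) := by
  have h := iso_fixed_card horth (diagSubgroup R)
  rwa [card_fixed_sum, card_fixed_sum, card_fixed_sum] at h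

lemma mark_bound {G H : Type} [Group G] [Group H] [Finite G] [Finite H] (p : OrthPair G H)
    (L : Subgroup (G × H)) :
    |(Nat.card ↥(fixedPoints ↥L p.X) : ℤ) - (Nat.card ↥(fixedPoints ↥L p.Y) : ℤ)| ≤
      (Nat.card G : ℤ) * Nat.card H := by
  classical
  have hBnn : (0 : ℤ) ≤ (Nat.card G : ℤ) * Nat.card H := by positivity
  by_cases hne : (fixedPoints ↥L p.X).Nonempty ∨ (fixedPoints ↥L p.Y).Nonempty
  · obtain ⟨R, ψ₀, rfl⟩ : ∃ (R : Subgroup G) (ψ : ↥R →* H), L = graphSub R ψ := by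
      rcases hne with ⟨x, hx⟩ | ⟨y, hy⟩
      · exact exists_graph_of_fixed p.bifreeX hx
      · exact exists_graph_of_fixed p.bifreeY hy
    letI : Fintype (↥R →* H) := Fintype.ofFinite _
    have hsum : ∑ ψ : ↥R →* H,
        ((Nat.card ↥(fixedPoints ↥(graphSub R ψ) p.X) : ℤ) -
          (Nat.card ↥(fixedPoints ↥(graphSub R ψ) p.Y) : ℤ)) ^ 2 =
        (Nat.card ↥(fixedPoints ↥(diagSubgroup R) (BisetGrp G)) : ℤ) * Nat.card H := by
      have eXX : (∑ ψ : ↥R →* H,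
          (Nat.card ↥(fixedPoints ↥(graphSub R ψ) p.X) : ℤ) *
            (Nat.card ↥(fixedPoints ↥(graphSub R ψ) p.X) : ℤ)) =
          (Nat.card ↥(fixedPoints ↥(diagSubgroup R)
            (BisetTensor G H G p.X (BisetOp H G p.X))) : ℤ) * Nat.card H := by
        exact_mod_cast congrArg (Nat.cast (R := ℤ)) (key_count p.bifreeX R).symm
      have eYY : (∑ ψ : ↥R →* H,
          (Nat.card ↥(fixedPoints ↥(graphSub R ψ) p.Y) : ℤ) *
            (Nat.card ↥(fixedPoints ↥(graphSub R ψ) p.Y) : ℤ)) =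
          (Nat.card ↥(fixedPoints ↥(diagSubgroup R)
            (BisetTensor G H G p.Y (BisetOp H G p.Y))) : ℤ) * Nat.card H := by
        exact_mod_cast congrArg (Nat.cast (R := ℤ)) (key_count p.bifreeY R).symm
      have eXY : (∑ ψ : ↥R →* H,
          (Nat.card ↥(fixedPoints ↥(graphSub R ψ) p.X) : ℤ) *
            (Nat.card ↥(fixedPoints ↥(graphSub R ψ) p.Y) : ℤ)) =
          (Nat.card ↥(fixedPoints ↥(diagSubgroup R)
            (BisetTensor G H G p.X (BisetOp H G p.Y))) : ℤ) * Nat.card H := by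
        exact_mod_cast congrArg (Nat.cast (R := ℤ)) (key_count p.bifreeX R).symm
      have eYX : (∑ ψ : ↥R →* H,
          (Nat.card ↥(fixedPoints ↥(graphSub R ψ) p.Y) : ℤ) *
            (Nat.card ↥(fixedPoints ↥(graphSub R ψ) p.X) : ℤ)) =
          (Nat.card ↥(fixedPoints ↥(diagSubgroup R)
            (BisetTensor G H G p.Y (BisetOp H G p.X))) : ℤ) * Nat.card H := by
        exact_mod_cast congrArg (Nat.cast (R := ℤ)) (key_count p.bifreeY R).symm
      have horthN := orth_count R p.orth
      have hN : (Nat.card ↥(fixedPoints ↥(diagSubgroup R)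
            (BisetTensor G H G p.X (BisetOp H G p.X))) : ℤ) +
          (Nat.card ↥(fixedPoints ↥(diagSubgroup R)
            (BisetTensor G H G p.Y (BisetOp H G p.Y))) : ℤ) =
          (Nat.card ↥(fixedPoints ↥(diagSubgroup R) (BisetGrp G)) : ℤ) +
          ((Nat.card ↥(fixedPoints ↥(diagSubgroup R)
            (BisetTensor G H G p.X (BisetOp H G p.Y))) : ℤ) +
           (Nat.card ↥(fixedPoints ↥(diagSubgroup R)
            (BisetTensor G H G p.Y (BisetOp H G p.X))) : ℤ)) := by
        exact_mod_cast congrArg (Nat.cast (R := ℤ)) horthN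
      calc ∑ ψ : ↥R →* H,
            ((Nat.card ↥(fixedPoints ↥(graphSub R ψ) p.X) : ℤ) -
              (Nat.card ↥(fixedPoints ↥(graphSub R ψ) p.Y) : ℤ)) ^ 2
          = (∑ ψ : ↥R →* H,
              (Nat.card ↥(fixedPoints ↥(graphSub R ψ) p.X) : ℤ) *
                (Nat.card ↥(fixedPoints ↥(graphSub R ψ) p.X) : ℤ)) +
            (∑ ψ : ↥R →* H,
              (Nat.card ↥(fixedPoints ↥(graphSub R ψ) p.Y) : ℤ) *
                (Nat.card ↥(fixedPoints ↥(graphSub R ψ) p.Y) : ℤ)) -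
            ((∑ ψ : ↥R →* H,
              (Nat.card ↥(fixedPoints ↥(graphSub R ψ) p.X) : ℤ) *
                (Nat.card ↥(fixedPoints ↥(graphSub R ψ) p.Y) : ℤ)) +
             (∑ ψ : ↥R →* H,
              (Nat.card ↥(fixedPoints ↥(graphSub R ψ) p.Y) : ℤ) *
                (Nat.card ↥(fixedPoints ↥(graphSub R ψ) p.X) : ℤ))) := by
            rw [← Finset.sum_add_distrib, ← Finset.sum_add_distrib, ← Finset.sum_sub_distrib]
            exact Finset.sum_congr rfl fun ψ _ => by ring
        _ = (Nat.card ↥(fixedPoints ↥(diagSubgroup R) (BisetGrp G)) : ℤ) * Nat.card H := by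
            rw [eXX, eYY, eXY, eYX]
            linear_combination (Nat.card H : ℤ) * hN
    have hterm : ((Nat.card ↥(fixedPoints ↥(graphSub R ψ₀) p.X) : ℤ) -
        (Nat.card ↥(fixedPoints ↥(graphSub R ψ₀) p.Y) : ℤ)) ^ 2 ≤
        (Nat.card ↥(fixedPoints ↥(diagSubgroup R) (BisetGrp G)) : ℤ) * Nat.card H := by
      rw [← hsum]
      exact Finset.single_le_sum (f := fun ψ : ↥R →* H =>
        ((Nat.card ↥(fixedPoints ↥(graphSub R ψ) p.X) : ℤ) -
          (Nat.card ↥(fixedPoints ↥(graphSub R ψ) p.Y) : ℤ)) ^ 2)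
        (fun ψ _ => sq_nonneg _) (Finset.mem_univ ψ₀)
    have hcg : (Nat.card ↥(fixedPoints ↥(diagSubgroup R) (BisetGrp G)) : ℤ) ≤ Nat.card G := by
      exact_mod_cast card_fixed_grp_le (diagSubgroup R)
    have hH : (0 : ℤ) ≤ Nat.card H := by positivity
    have habs := int_abs_le_sq ((Nat.card ↥(fixedPoints ↥(graphSub R ψ₀) p.X) : ℤ) -
        (Nat.card ↥(fixedPoints ↥(graphSub R ψ₀) p.Y) : ℤ))
    have hmul : (Nat.card ↥(fixedPoints ↥(diagSubgroup R) (BisetGrp G)) : ℤ) * Nat.card H ≤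
        (Nat.card G : ℤ) * Nat.card H := mul_le_mul_of_nonneg_right hcg hH
    linarith
  · push_neg at hne
    obtain ⟨hne1, hne2⟩ := hne
    have e1 : Nat.card ↥(fixedPoints ↥L p.X) = 0 := by rw [hne1]; simp
    have e2 : Nat.card ↥(fixedPoints ↥L p.Y) = 0 := by rw [hne2]; simp
    rw [e1, e2]
    simp only [Nat.cast_zero, sub_zero, abs_zero]
    exact hBnn

end AuxFinal
/-- the set of mark functions `L ↦ |X^L| - |Y^L|` of orthogonal pairs `(X,Y)` of
finite bifree `(G,H)`-bisets is finite (i.e. `B°^Δ(G,H)` is finite). -/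
theorem statement9 (G H : Type) [Group G] [Group H] [Finite G] [Finite H] :
    {f : Subgroup (G × H) → ℤ | ∃ p : OrthPair G H,
      ∀ L : Subgroup (G × H),
        f L = (Nat.card (MulAction.fixedPoints L p.X) : ℤ) -
          (Nat.card (MulAction.fixedPoints L p.Y) : ℤ)}.Finite := by
  classical
  haveI : Finite (Subgroup (G × H)) :=
    Finite.of_injective (fun K : Subgroup (G × H) => (K : Set (G × H))) SetLike.coe_injective
  set B : ℤ := (Nat.card G : ℤ) * Nat.card H with hB
  apply Set.Finite.subset
    (Set.Finite.pi (fun _ : Subgroup (G × H) => Set.finite_Icc (-B) B))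
  rintro f ⟨p, hp⟩
  rw [Set.mem_univ_pi]
  intro L
  rw [Set.mem_Icc, hp L]
  have h := mark_bound p L
  rw [abs_le] at h
  exact h
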